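/- If s = (s_1,…,s_{q²−1}) has all coordinates nonnegative and t ≥ 2g − 1, then #Ω_{0,s,t} = #Ω_{0,0,t} + q·|s|, where the first 0 denotes the zero vector in ℤ^q, the second pair (0,0) denotes both zero vectors, and |s| = Σ_{ν=1}^{q²−1} s_ν. -/

import Mathlib

open Finset

/-- Telescoping shift lemma: adding `m*q*c` to the numerator shifts the period sum by `q*c`. -/
lemma sum_shift (q : ℕ) (m M : ℤ) (hM : M = m * ((q : ℤ) + 1)) (hM0 : M ≠ 0)
    (X : ℤ) (c : ℕ) :
    ∑ b ∈ range (q + 1), ((X + m * q * c - m * q * b) / M)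
      = (∑ b ∈ range (q + 1), ((X - m * q * b) / M)) + q * c := by
  induction c with
  | zero => simp
  | succ c ih =>
    have key : ∀ Y : ℤ, ∑ b ∈ range (q + 1), ((Y - m * q * b) / M)
        = (∑ b ∈ range (q + 1), ((Y + m * q - m * q * b) / M)) - q := by
      intro Y
      have h1 : ∀ b ∈ range (q + 1), (Y - m * q * b) / M
          = (Y + m * q - m * q * ((b : ℕ) + 1 : ℕ)) / M := by
        intro b _; push_cast; ring_nf
      have h2 : (Y + m * q - m * q * ((q : ℕ) + 1 : ℕ)) / M = (Y + m * q - m * q * (0:ℕ)) / M - q := by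
        have e : Y + m * q - m * q * ((q : ℕ) + 1 : ℕ) = (Y + m * q - m * q * (0:ℕ)) + (-q) * M := by
          push_cast [hM]; ring
        rw [e, Int.add_mul_ediv_right _ _ hM0]; ring
      calc ∑ b ∈ range (q + 1), ((Y - m * q * b) / M)
          = ∑ b ∈ range (q + 1), ((Y + m * q - m * q * ((b : ℕ) + 1 : ℕ)) / M) :=
            Finset.sum_congr rfl h1
        _ = ∑ b ∈ range (q + 2), ((Y + m * q - m * q * (b : ℕ)) / M)
              - (Y + m * q - m * q * (0:ℕ)) / M := by
            rw [Finset.sum_range_succ' (fun b : ℕ => (Y + m * q - m * q * (b : ℕ)) / M) (q + 1)]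
            ring
        _ = (∑ b ∈ range (q + 1), ((Y + m * q - m * q * (b : ℕ)) / M))
              + (Y + m * q - m * q * ((q : ℕ) + 1 : ℕ)) / M
              - (Y + m * q - m * q * (0:ℕ)) / M := by
            rw [Finset.sum_range_succ]
        _ = (∑ b ∈ range (q + 1), ((Y + m * q - m * q * b) / M)) - q := by rw [h2]; ring
    have e1 : ∀ b ∈ range (q + 1), (X + m * q * (c + 1 : ℕ) - m * q * b) / M
        = (X + m * q * c + m * q - m * q * b) / M := by intro b _; push_cast; ring_nf
    calc ∑ b ∈ range (q + 1), ((X + m * q * (c + 1 : ℕ) - m * q * b) / M)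
        = ∑ b ∈ range (q + 1), ((X + m * q * c + m * q - m * q * b) / M) :=
          Finset.sum_congr rfl e1
      _ = (∑ b ∈ range (q + 1), ((X + m * q * c - m * q * b) / M)) + q := by
          have := key (X + m * q * c)
          linarith [this]
      _ = (∑ b ∈ range (q + 1), ((X - m * q * b) / M)) + q * c + q := by rw [ih]
      _ = (∑ b ∈ range (q + 1), ((X - m * q * b) / M)) + q * (c + 1 : ℕ) := by push_cast; ring

/-- Hermite-type identity: `∑_{a=0}^{m-1} ⌊(a+s)/m⌋ = s`. -/
lemma sum_ediv_eq (m : ℤ) (hm : 0 < m) (s : ℤ) :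
    ∑ a ∈ Finset.Ico (0 : ℤ) m, ((a + s) / m) = s := by
  have hm0 : m ≠ 0 := hm.ne'
  have hmod : ∑ a ∈ Finset.Ico (0 : ℤ) m, ((a + s) % m) = ∑ a ∈ Finset.Ico (0 : ℤ) m, a := by
    apply Finset.sum_nbij' (i := fun a => (a + s) % m) (j := fun a => (a - s) % m)
    · intro a ha
      simp only [Finset.mem_Ico] at *
      exact ⟨Int.emod_nonneg _ hm0, Int.emod_lt_of_pos _ hm⟩
    · intro a ha
      simp only [Finset.mem_Ico] at *
      exact ⟨Int.emod_nonneg _ hm0, Int.emod_lt_of_pos _ hm⟩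
    · intro a ha
      simp only [Finset.mem_Ico] at ha
      rw [Int.sub_emod, Int.emod_emod_of_dvd _ dvd_rfl, ← Int.sub_emod,
        add_sub_cancel_right]
      exact Int.emod_eq_of_lt ha.1 ha.2
    · intro a ha
      simp only [Finset.mem_Ico] at ha
      rw [Int.add_emod, Int.emod_emod_of_dvd _ dvd_rfl, ← Int.add_emod,
        sub_add_cancel]
      exact Int.emod_eq_of_lt ha.1 ha.2
    · intro a ha; rfl
  have key : m * (∑ a ∈ Finset.Ico (0 : ℤ) m, ((a + s) / m)) = m * s := by
    rw [Finset.mul_sum]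
    have h1 : ∀ a ∈ Finset.Ico (0 : ℤ) m, m * ((a + s) / m) = (a + s) - (a + s) % m := by
      intro a _; rw [Int.emod_def]; ring
    rw [Finset.sum_congr rfl h1, Finset.sum_sub_distrib, hmod, Finset.sum_add_distrib]
    have hcard : ((Finset.Ico (0 : ℤ) m).card : ℤ) = m := by
      rw [Int.card_Ico]; simp [Int.toNat_of_nonneg hm.le]
    rw [Finset.sum_const, nsmul_eq_mul, hcard]; ring
  exact mul_left_cancel₀ hm0 key

/-- Decompose a sum over `[0, m*k)` as a double sum over quotient and residue. -/
lemma sum_Ico_mul_eq (m : ℤ) (hm : 0 < m) (k : ℕ) (f : ℤ → ℤ) :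
    ∑ ρ ∈ Finset.Ico (0 : ℤ) (m * k), f ρ
      = ∑ b ∈ range k, ∑ a ∈ Finset.Ico (0 : ℤ) m, f (a + m * b) := by
  induction k with
  | zero => simp
  | succ k ih =>
    have h1 : (0 : ℤ) ≤ m * k := by positivity
    have h2 : m * (k : ℤ) ≤ m * ((k:ℕ) + 1 : ℕ) := by push_cast; nlinarith
    have hsplit : Finset.Ico (0:ℤ) (m * ((k:ℕ)+1:ℕ))
        = Finset.Ico (0:ℤ) (m * k) ∪ Finset.Ico (m * (k:ℤ)) (m * ((k:ℕ)+1:ℕ)) :=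
      (Finset.Ico_union_Ico_eq_Ico h1 h2).symm
    rw [hsplit, Finset.sum_union (Finset.Ico_disjoint_Ico_consecutive _ _ _), ih,
      Finset.sum_range_succ]
    congr 1
    have hmap : Finset.Ico (m * (k:ℤ)) (m * ((k:ℕ)+1:ℕ)) =
        (Finset.Ico (0:ℤ) m).map (addRightEmbedding (m * k)) := by
      rw [Finset.map_add_right_Ico]
      congr 1 <;> push_cast <;> ring
    rw [hmap, Finset.sum_map]
    apply Finset.sum_congr rfl
    intro a _
    simp [addRightEmbedding]

/-- The value of the final linear form at the unique lattice point lying over `i`. -/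
def Ffun (q : ℕ) (m : ℤ) (s : Fin (q ^ 2 - 1) → ℤ) (i : ℤ) : ℤ :=
  (q : ℤ) ^ 3 * i + m * ((q : ℤ) + 1) * (∑ _μ : Fin (q - 1), -(i / (m * ((q : ℤ) + 1))))
    + m * (q : ℤ) * (∑ ν, -((i + s ν) / m))

lemma Ffun_add (q : ℕ) (hq2 : 2 ≤ q) (m : ℤ) (hm : 0 < m) (s : Fin (q ^ 2 - 1) → ℤ)
    (i u : ℤ) :
    Ffun q m s (i + (m * ((q : ℤ) + 1)) * u) = Ffun q m s i + (m * ((q : ℤ) + 1)) * u := by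
  have hM0 : m * ((q : ℤ) + 1) ≠ 0 := by positivity
  have hdiv1 : (i + (m * ((q:ℤ)+1)) * u) / (m * ((q:ℤ)+1)) = i / (m * ((q:ℤ)+1)) + u :=
    Int.add_mul_ediv_left _ _ hM0
  have hdiv2 : ∀ ν : Fin (q ^ 2 - 1),
      (i + (m * ((q:ℤ)+1)) * u + s ν) / m = (i + s ν) / m + ((q:ℤ)+1) * u := by
    intro ν
    rw [show i + (m * ((q:ℤ)+1)) * u + s ν = (i + s ν) + m * (((q:ℤ)+1) * u) by ring,
      Int.add_mul_ediv_left _ _ hm.ne']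
  have c1 : ((q - 1 : ℕ) : ℤ) = (q : ℤ) - 1 := by
    rw [Nat.cast_sub (by omega)]; norm_num
  have c2 : ((q ^ 2 - 1 : ℕ) : ℤ) = (q : ℤ) ^ 2 - 1 := by
    rw [Nat.cast_sub (by nlinarith)]; push_cast; ring
  simp only [Ffun, hdiv1, hdiv2, neg_add, Finset.sum_add_distrib, Finset.sum_const,
    Finset.card_univ, Fintype.card_fin, nsmul_eq_mul, smul_eq_mul]
  rw [c1, c2]; ring

/-- Counting formula for the one-dimensional set. -/
lemma ncard_eq_sum (q : ℕ) (hq2 : 2 ≤ q) (m : ℤ) (hm : 0 < m)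
    (s : Fin (q ^ 2 - 1) → ℤ) (t : ℤ)
    (hb : ∀ ρ : ℤ, 0 ≤ ρ → ρ < m * ((q:ℤ)+1) →
      Ffun q m s ρ ≤ t + m * ((q:ℤ)+1)) :
    ({i : ℤ | 0 ≤ i ∧ Ffun q m s i ≤ t}.ncard : ℤ)
      = ∑ ρ ∈ Finset.Ico (0:ℤ) (m * ((q:ℤ)+1)),
          ((t - Ffun q m s ρ) / (m * ((q:ℤ)+1)) + 1) := by
  set M : ℤ := m * ((q:ℤ)+1) with hMdef
  have hM : 0 < M := by positivity
  have hM0 : M ≠ 0 := hM.ne'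
  set F : ℤ → ℤ := Ffun q m s with hFdef
  have hFadd : ∀ i u : ℤ, F (i + M * u) = F i + M * u := fun i u => Ffun_add q hq2 m hm s i u
  set D : Finset ℤ := (Finset.Ico (0:ℤ) M).biUnion
    (fun ρ => (Finset.Icc (0:ℤ) ((t - F ρ) / M)).image (fun u => ρ + M * u)) with hDdef
  have hset : {i : ℤ | 0 ≤ i ∧ F i ≤ t} = ↑D := by
    ext i
    simp only [Set.mem_setOf_eq, hDdef, Finset.coe_biUnion, Finset.coe_Ico, Set.mem_iUnion,
      Finset.coe_image, Finset.coe_Icc, Set.mem_image, Set.mem_Icc, Set.mem_Ico,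
      exists_prop]
    constructor
    · rintro ⟨hi0, hit⟩
      refine ⟨i % M, ⟨Int.emod_nonneg i hM0, Int.emod_lt_of_pos i hM⟩, i / M,
        ⟨Int.ediv_nonneg hi0 hM.le, ?_⟩, ?_⟩
      · have hrec : i % M + M * (i / M) = i := by
          rw [add_comm]; exact Int.mul_ediv_add_emod i M
        have hFi : F (i % M) + M * (i / M) = F i := by
          rw [← hFadd (i % M) (i / M), hrec]
        rw [Int.le_ediv_iff_mul_le hM, mul_comm]
        omega
      · rw [add_comm]; exact Int.mul_ediv_add_emod i M
    · rintro ⟨ρ, ⟨hρ0, hρM⟩, u, ⟨hu0, hu⟩, rfl⟩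
      constructor
      · positivity
      · have h1 : F (ρ + M * u) = F ρ + M * u := hFadd ρ u
        have h2 : M * u ≤ M * ((t - F ρ) / M) :=
          mul_le_mul_of_nonneg_left hu hM.le
        have h3 : M * ((t - F ρ) / M) ≤ t - F ρ := by
          rw [mul_comm]; exact Int.ediv_mul_le _ hM0
        omega
  have hdisj : ∀ ρ₁ ∈ Finset.Ico (0:ℤ) M, ∀ ρ₂ ∈ Finset.Ico (0:ℤ) M, ρ₁ ≠ ρ₂ →
      Disjoint ((Finset.Icc (0:ℤ) ((t - F ρ₁) / M)).image (fun u => ρ₁ + M * u))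
        ((Finset.Icc (0:ℤ) ((t - F ρ₂) / M)).image (fun u => ρ₂ + M * u)) := by
    intro ρ₁ h₁ ρ₂ h₂ hne
    simp only [Finset.mem_Ico] at h₁ h₂
    rw [Finset.disjoint_left]
    rintro x hx₁ hx₂
    simp only [Finset.mem_image, Finset.mem_Icc] at hx₁ hx₂
    obtain ⟨u₁, _, rfl⟩ := hx₁
    obtain ⟨u₂, _, h⟩ := hx₂
    have hdvd : M ∣ ρ₁ - ρ₂ := ⟨u₂ - u₁, by linarith [h]⟩
    have habs : |ρ₁ - ρ₂| < M := by rw [abs_lt]; omega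
    have := Int.eq_zero_of_abs_lt_dvd hdvd habs
    omega
  have hcard : D.card = ∑ ρ ∈ Finset.Ico (0:ℤ) M, ((t - F ρ) / M + 1).toNat := by
    rw [hDdef, Finset.card_biUnion hdisj]
    apply Finset.sum_congr rfl
    intro ρ _
    rw [Finset.card_image_of_injective _ (fun u₁ u₂ h => by
      have : M * u₁ = M * u₂ := by linarith [h]
      exact mul_left_cancel₀ hM0 this), Int.card_Icc]
    congr 1
    omega
  rw [hset, Set.ncard_coe_finset, hcard, Nat.cast_sum]
  apply Finset.sum_congr rfl
  intro ρ hρ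
  simp only [Finset.mem_Ico] at hρ
  have hbρ : F ρ ≤ t + M := hb ρ hρ.1 hρ.2
  have hge : (-1 : ℤ) ≤ (t - F ρ) / M := by
    have h1 : (-1) * M ≤ t - F ρ := by linarith
    have h2 : ((-1) * M) / M = -1 := Int.mul_ediv_cancel _ hM0
    calc (-1 : ℤ) = ((-1) * M) / M := h2.symm
      _ ≤ (t - F ρ) / M := Int.ediv_le_ediv hM h1
  rw [Int.toNat_of_nonneg (by omega)]

/-- Evaluation of `Ffun` on the fundamental domain. -/
lemma Ffun_eval (q : ℕ) (hq2 : 2 ≤ q) (m : ℤ) (hm : 0 < m) (s : Fin (q ^ 2 - 1) → ℤ)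
    (a b : ℤ) (ha : 0 ≤ a) (ha' : a < m) (hb : 0 ≤ b) (hb' : b ≤ q) :
    Ffun q m s (a + m * b)
      = (q : ℤ) ^ 3 * a + m * q * b - m * q * ∑ ν, ((a + s ν) / m) := by
  have c2 : ((q ^ 2 - 1 : ℕ) : ℤ) = (q : ℤ) ^ 2 - 1 := by
    rw [Nat.cast_sub (by nlinarith)]; push_cast; ring
  have hd1 : (a + m * b) / (m * ((q:ℤ)+1)) = 0 := by
    apply Int.ediv_eq_zero_of_lt (by positivity) (by nlinarith)
  have hd2 : ∀ ν : Fin (q ^ 2 - 1), (a + m * b + s ν) / m = (a + s ν) / m + b := by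
    intro ν
    rw [show a + m * b + s ν = (a + s ν) + m * b by ring, Int.add_mul_ediv_left _ _ hm.ne']
  simp only [Ffun, hd1, hd2, neg_add, neg_zero, Finset.sum_const, Finset.card_univ,
    Fintype.card_fin, Finset.sum_add_distrib, nsmul_eq_mul, smul_eq_mul, mul_zero]
  rw [c2]
  have h3 : ∑ ν : Fin (q ^ 2 - 1), -((a + s ν) / m) = -∑ ν, ((a + s ν) / m) :=
    Finset.sum_neg_distrib _
  rw [h3]; ring

/-- The lattice point set `Ω_{r,s,t}` associated with the GGS curve:
triples `(i, j, k)` with `i + r 0 ≥ 0`, `0 ≤ i + m(q+1) j_μ + r_μ < m(q+1)` for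
`μ = 1, …, q-1`, `0 ≤ i + m k_ν + s_ν < m` for `ν = 1, …, q²-1`, and
`q³ i + m(q+1)|j| + m q |k| ≤ t`. -/
def OmegaSet (q : ℕ) (hq : 0 < q) (m : ℤ) (r : Fin q → ℤ) (s : Fin (q ^ 2 - 1) → ℤ)
    (t : ℤ) : Set (ℤ × (Fin (q - 1) → ℤ) × (Fin (q ^ 2 - 1) → ℤ)) :=
  {p | 0 ≤ p.1 + r ⟨0, hq⟩ ∧
    (∀ μ : Fin (q - 1),
      0 ≤ p.1 + m * ((q : ℤ) + 1) * p.2.1 μ + r ⟨μ.val + 1, by have := μ.isLt; omega⟩ ∧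
      p.1 + m * ((q : ℤ) + 1) * p.2.1 μ + r ⟨μ.val + 1, by have := μ.isLt; omega⟩
        < m * ((q : ℤ) + 1)) ∧
    (∀ ν : Fin (q ^ 2 - 1), 0 ≤ p.1 + m * p.2.2 ν + s ν ∧ p.1 + m * p.2.2 ν + s ν < m) ∧
    (q : ℤ) ^ 3 * p.1 + m * ((q : ℤ) + 1) * (∑ μ, p.2.1 μ)
      + m * (q : ℤ) * (∑ ν, p.2.2 ν) ≤ t}


/-- The Ω set is the image of a one-dimensional set. -/
lemma omega_eq_image (q : ℕ) (hq : 0 < q) (hq2 : 2 ≤ q) (m : ℤ) (hm : 0 < m)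
    (s : Fin (q ^ 2 - 1) → ℤ) (t : ℤ) :
    OmegaSet q hq m (fun _ => 0) s t
      = (fun i : ℤ => (i, fun _ : Fin (q - 1) => -(i / (m * ((q:ℤ)+1))),
          fun ν : Fin (q ^ 2 - 1) => -((i + s ν) / m))) ''
        {i : ℤ | 0 ≤ i ∧ Ffun q m s i ≤ t} := by
  have hM : (0:ℤ) < m * ((q:ℤ)+1) := by positivity
  have hM0 : m * ((q:ℤ)+1) ≠ 0 := hM.ne'
  ext p
  simp only [OmegaSet, Set.mem_setOf_eq, Set.mem_image, add_zero]
  constructor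
  · obtain ⟨i, j, k⟩ := p
    rintro ⟨h0, h1, h2, h3⟩
    simp only at h0 h1 h2 h3
    have hj : ∀ μ, j μ = -(i / (m * ((q:ℤ)+1))) := by
      intro μ
      obtain ⟨hl, hr⟩ := h1 μ
      have h4 : (i + m * ((q:ℤ)+1) * j μ) / (m * ((q:ℤ)+1)) = 0 :=
        Int.ediv_eq_zero_of_lt hl hr
      rw [Int.add_mul_ediv_left _ _ hM0] at h4
      linarith
    have hk : ∀ ν, k ν = -((i + s ν) / m) := by
      intro ν
      obtain ⟨hl, hr⟩ := h2 ν
      rw [show i + m * k ν + s ν = (i + s ν) + m * k ν by ring] at hl hr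
      have h4 : ((i + s ν) + m * k ν) / m = 0 := Int.ediv_eq_zero_of_lt hl hr
      rw [Int.add_mul_ediv_left _ _ hm.ne'] at h4
      linarith
    refine ⟨i, ⟨h0, ?_⟩, ?_⟩
    · show Ffun q m s i ≤ t
      rw [Ffun, ← Finset.sum_congr rfl (fun μ _ => hj μ),
        ← Finset.sum_congr rfl (fun ν _ => hk ν)]
      exact h3
    · simp only [Prod.mk.injEq]
      exact ⟨trivial, funext fun μ => (hj μ).symm, funext fun ν => (hk ν).symm⟩
  · rintro ⟨x, ⟨hx0, hxt⟩, rfl⟩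
    refine ⟨hx0, ?_, ?_, ?_⟩
    · intro μ
      have he : x + m * ((q:ℤ)+1) * -(x / (m * ((q:ℤ)+1))) = x % (m * ((q:ℤ)+1)) := by
        rw [Int.emod_def]; ring
      rw [he]
      exact ⟨Int.emod_nonneg x hM0, Int.emod_lt_of_pos x hM⟩
    · intro ν
      have he : x + m * -((x + s ν) / m) + s ν = (x + s ν) % m := by
        rw [Int.emod_def]; ring
      rw [he]
      exact ⟨Int.emod_nonneg _ hm.ne', Int.emod_lt_of_pos _ hm⟩
    · exact hxt

/-- If all coordinates of `s` are nonnegative and `t ≥ 2g - 1`, then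
`#Ω_{0,s,t} = #Ω_{0,0,t} + q |s|`. -/
theorem card_OmegaSet_s_zero (q n : ℕ) (hq : IsPrimePow q) (hn : Odd n) (hn1 : 1 < n)
    (m : ℤ) (hm : m * ((q : ℤ) + 1) = (q : ℤ) ^ n + 1) (g : ℤ)
    (hg : 2 * g = ((q : ℤ) - 1) * ((q : ℤ) ^ (n + 1) + (q : ℤ) ^ n - (q : ℤ) ^ 2))
    (s : Fin (q ^ 2 - 1) → ℤ) (t : ℤ)
    (hs : ∀ ν, 0 ≤ s ν) (ht : 2 * g - 1 ≤ t) :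
    ((OmegaSet q hq.pos m (fun _ => 0) s t).ncard : ℤ)
      = ((OmegaSet q hq.pos m (fun _ => 0) (fun _ => 0) t).ncard : ℤ)
        + (q : ℤ) * (∑ ν, s ν) := by
  have hq2 : 2 ≤ q := hq.two_le
  have hq2' : (2:ℤ) ≤ (q:ℤ) := by exact_mod_cast hq2
  have hm0 : 0 < m := by
    have h1 : (0:ℤ) < (q:ℤ)^n + 1 := by positivity
    rw [← hm] at h1
    by_contra h
    push_neg at h
    nlinarith
  have hM : (0:ℤ) < m * ((q:ℤ)+1) := by positivity
  have hM0 : m * ((q:ℤ)+1) ≠ 0 := hM.ne'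
  have hY : (q:ℤ)^(n+1) = (q:ℤ)^n * q := pow_succ _ _
  have hkey : (q:ℤ)^3*(m-1) + m*(q:ℤ)*(q:ℤ) = 2*g - 1 + m*((q:ℤ)+1) := by
    linear_combination (-1 : ℤ) * hg + ((q:ℤ)^2 - 1) * hm - ((q:ℤ) - 1) * hY
  -- boundary estimate
  have hbound : ∀ (s' : Fin (q^2-1) → ℤ), (∀ ν, 0 ≤ s' ν) → ∀ ρ : ℤ, 0 ≤ ρ →
      ρ < m*((q:ℤ)+1) → Ffun q m s' ρ ≤ t + m*((q:ℤ)+1) := by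
    intro s' hs' ρ hρ0 hρM
    have ha0 : 0 ≤ ρ % m := Int.emod_nonneg ρ hm0.ne'
    have ham : ρ % m < m := Int.emod_lt_of_pos ρ hm0
    have hb0 : 0 ≤ ρ / m := Int.ediv_nonneg hρ0 hm0.le
    have hrec : ρ % m + m * (ρ / m) = ρ := by
      rw [add_comm]; exact Int.mul_ediv_add_emod ρ m
    have hbq : ρ / m ≤ (q:ℤ) := by
      by_contra h
      push_neg at h
      have h1 : (q:ℤ) + 1 ≤ ρ / m := by omega
      have h2 : m * ((q:ℤ)+1) ≤ m * (ρ / m) := mul_le_mul_of_nonneg_left h1 hm0.le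
      linarith
    have heval := Ffun_eval q hq2 m hm0 s' (ρ % m) (ρ / m) ha0 ham hb0 hbq
    rw [← hrec, heval]
    have hsum : 0 ≤ ∑ ν, ((ρ % m + s' ν)/m) :=
      Finset.sum_nonneg fun ν _ => Int.ediv_nonneg (by linarith [hs' ν]) hm0.le
    have hq3 : (0:ℤ) ≤ (q:ℤ)^3 := by positivity
    have e1 : (q:ℤ)^3 * (ρ % m) ≤ (q:ℤ)^3 * (m - 1) :=
      mul_le_mul_of_nonneg_left (by omega) hq3
    have e2 : m * (q:ℤ) * (ρ / m) ≤ m * (q:ℤ) * (q:ℤ) :=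
      mul_le_mul_of_nonneg_left hbq (by positivity)
    have e3 : 0 ≤ m * (q:ℤ) * ∑ ν, ((ρ % m + s' ν)/m) :=
      mul_nonneg (by positivity) hsum
    linarith
  -- the grid count
  have hcount : ∀ (s' : Fin (q^2-1) → ℤ), (∀ ν, 0 ≤ s' ν) →
      ({i : ℤ | 0 ≤ i ∧ Ffun q m s' i ≤ t}.ncard : ℤ)
        = (∑ a ∈ Finset.Ico (0:ℤ) m, ∑ b ∈ range (q+1),
            ((t - (q:ℤ)^3*a - m*(q:ℤ)*(b:ℤ)) / (m*((q:ℤ)+1)) + 1))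
          + (q:ℤ) * ∑ a ∈ Finset.Ico (0:ℤ) m, ∑ ν, ((a + s' ν)/m) := by
    intro s' hs'
    rw [ncard_eq_sum q hq2 m hm0 s' t (hbound s' hs')]
    have hgrid := sum_Ico_mul_eq m hm0 (q+1)
      (fun ρ => (t - Ffun q m s' ρ) / (m*((q:ℤ)+1)) + 1)
    rw [show m * (((q+1:ℕ)):ℤ) = m*((q:ℤ)+1) by push_cast; ring] at hgrid
    rw [hgrid, Finset.sum_comm, Finset.mul_sum, ← Finset.sum_add_distrib]
    apply Finset.sum_congr rfl
    intro a ha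
    rw [Finset.mem_Ico] at ha
    have hc0 : 0 ≤ ∑ ν, ((a + s' ν)/m) :=
      Finset.sum_nonneg fun ν _ => Int.ediv_nonneg (by linarith [hs' ν]) hm0.le
    have e1 : ∀ b ∈ range (q+1),
        (t - Ffun q m s' (a + m*(b:ℤ))) / (m*((q:ℤ)+1)) + 1
          = ((t - (q:ℤ)^3*a) + m*(q:ℤ)*(((∑ ν, ((a + s' ν)/m)).toNat : ℕ):ℤ)
              - m*(q:ℤ)*(b:ℤ)) / (m*((q:ℤ)+1)) + 1 := by
      intro b hb
      rw [Finset.mem_range] at hb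
      rw [Ffun_eval q hq2 m hm0 s' a b ha.1 ha.2 (by positivity)
        (by exact_mod_cast Nat.lt_succ_iff.mp hb)]
      rw [Int.toNat_of_nonneg hc0]
      congr 2
      ring
    rw [Finset.sum_congr rfl e1]
    simp only [Finset.sum_add_distrib]
    rw [sum_shift q m (m*((q:ℤ)+1)) rfl hM0 (t - (q:ℤ)^3*a) (∑ ν, ((a + s' ν)/m)).toNat,
      Int.toNat_of_nonneg hc0]
    ring
  -- injectivity of the parametrization
  have hinj : ∀ (s' : Fin (q^2-1) → ℤ), Function.Injective
      (fun i : ℤ => (i, fun _ : Fin (q - 1) => -(i / (m * ((q:ℤ)+1))),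
        fun ν : Fin (q ^ 2 - 1) => -((i + s' ν) / m))) :=
    fun s' a b h => congrArg Prod.fst h
  rw [omega_eq_image q hq.pos hq2 m hm0 s t, omega_eq_image q hq.pos hq2 m hm0 (fun _ => 0) t,
    Set.ncard_image_of_injective _ (hinj s), Set.ncard_image_of_injective _ (hinj (fun _ => 0)),
    hcount s hs, hcount (fun _ => 0) (fun _ => le_refl 0)]
  have hz : ∑ a ∈ Finset.Ico (0:ℤ) m, ∑ ν : Fin (q^2-1), ((a + (0:ℤ))/m) = 0 := by
    apply Finset.sum_eq_zero
    intro a ha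
    rw [Finset.mem_Ico] at ha
    apply Finset.sum_eq_zero
    intro ν _
    rw [add_zero]
    exact Int.ediv_eq_zero_of_lt ha.1 ha.2
  have hsval : ∑ a ∈ Finset.Ico (0:ℤ) m, ∑ ν, ((a + s ν)/m) = ∑ ν, s ν := by
    rw [Finset.sum_comm]
    exact Finset.sum_congr rfl fun ν _ => sum_ediv_eq m hm0 (s ν)
  rw [hsval, hz]
  ring
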